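/- Let m, d ≥ 1, ε > 0, c = (e^ε+1)/(e^ε−1), Φ ∈ ℝ^{m×d}, and x ∈ [d]. Let J be uniformly distributed on [m], and independently let S = 1 with probability e^ε/(e^ε+1) and S = −1 with probability 1/(e^ε+1). Define the random vector z ∈ ℝ^m by z_J = S · c · m · (Φe_x)_J and z_ℓ = 0 for all ℓ ≠ J. Then E[z] = Φ e_x. -/

import Mathlib

open MeasureTheory ProbabilityTheory Real
open scoped ENNReal BigOperators

open Classical in
/-- Unbiasedness of the local randomizer in the projected frequency
estimation scheme: with `c = (e^ε+1)/(e^ε−1)`, a uniformly random coordinate `J ∈ [m]`,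
and an independent sign `S` with `Pr(S = 1) = e^ε/(e^ε+1)` and `S = −1` otherwise, the
random vector `z` with `z_J = S · c · m · (Φe_x)_J` and all other coordinates `0`
satisfies `E[z] = Φe_x`. -/
theorem stmt18 (m d : ℕ) (hm : 1 ≤ m) (hd : 1 ≤ d) (ε : ℝ) (hε : 0 < ε)
    (Φ : Matrix (Fin m) (Fin d) ℝ) (x : Fin d)
    (Ω : Type) [MeasurableSpace Ω] (Pr : Measure Ω) [IsProbabilityMeasure Pr]
    (J : Ω → Fin m) (S : Ω → ℝ)
    (hJm : Measurable J) (hSm : Measurable S)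
    (hindep : IndepFun J S Pr)
    -- J is uniform on [m]
    (hJunif : ∀ j, Pr {ω | J ω = j} = (m : ℝ≥0∞)⁻¹)
    -- S = 1 with probability e^ε/(e^ε+1), S = −1 otherwise
    (hS1 : ∀ᵐ ω ∂Pr, S ω = 1 ∨ S ω = -1)
    (hSlaw : Pr {ω | S ω = 1} = ENNReal.ofReal (Real.exp ε / (Real.exp ε + 1))) :
    (∫ ω, (fun j => if j = J ω then
        S ω * ((Real.exp ε + 1) / (Real.exp ε - 1)) * m * Φ (J ω) x else 0 : Fin m → ℝ) ∂Pr)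
      = fun j => Φ j x := by
  set E := Real.exp ε with hE
  have hE1 : 1 < E := by
    calc (1:ℝ) = Real.exp 0 := Real.exp_zero.symm
      _ < E := Real.exp_lt_exp.2 hε
  have hEne : E - 1 ≠ 0 := by linarith
  have hEpne : E + 1 ≠ 0 := by linarith
  have hmne : (m : ℝ) ≠ 0 := by
    have : (0:ℕ) < m := by omega
    exact_mod_cast this.ne'
  set c : ℝ := (E + 1) / (E - 1) with hc
  set g : Ω → Fin m → ℝ := fun ω => (fun j => if j = J ω then S ω * c * m * Φ (J ω) x else 0)
    with hg
  have hmpos : 0 < m := by omega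
  have : Nonempty (Fin m) := Fin.pos_iff_nonempty.1 hmpos
  -- a bound on Φ entries
  set M : ℝ := (Finset.univ.sup' Finset.univ_nonempty fun j : Fin m => |Φ j x|) with hM
  have hMb : ∀ j, |Φ j x| ≤ M := by
    intro j; rw [hM]; exact Finset.le_sup' (fun j : Fin m => |Φ j x|) (Finset.mem_univ j)
  have hM0 : 0 ≤ M := le_trans (abs_nonneg (Φ ⟨0, hmpos⟩ x)) (hMb ⟨0, hmpos⟩)
  -- measurability of g
  have hgmeas : Measurable g := by
    apply measurable_pi_lambda
    intro j
    have hset : MeasurableSet {ω | j = J ω} := by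
      have := hJm (MeasurableSet.singleton j)
      convert this using 1
      ext ω; simp [eq_comm]
    exact Measurable.ite hset ((hSm.mul measurable_const).mul measurable_const |>.mul
      ((measurable_from_top (f := fun jj : Fin m => Φ jj x)).comp hJm)) measurable_const
  -- integrability of g
  have hgint : Integrable g Pr := by
    apply Integrable.mono' (integrable_const (|c| * m * M)) hgmeas.aestronglyMeasurable
    filter_upwards [hS1] with ω hω
    have hC0 : (0:ℝ) ≤ |c| * m * M := by positivity
    rw [pi_norm_le_iff_of_nonneg hC0]
    intro j
    rw [Real.norm_eq_abs, hg]
    simp only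
    split_ifs with h
    · have hSabs : |S ω| = 1 := by rcases hω with h1 | h1 <;> simp [h1]
      have habs : |S ω * c * m * Φ (J ω) x| = |c| * m * |Φ (J ω) x| := by
        rw [abs_mul, abs_mul, abs_mul, hSabs, one_mul, Nat.abs_cast]
      rw [habs]
      exact mul_le_mul_of_nonneg_left (hMb (J ω)) (by positivity)
    · simpa using hC0
  -- main coordinatewise computation
  funext j
  have hproj := (ContinuousLinearMap.proj (R := ℝ) (φ := fun _ : Fin m => ℝ) j).integral_comp_comm hgint
  simp only [ContinuousLinearMap.proj_apply] at hproj
  rw [show (∫ ω, g ω ∂Pr) j = ∫ ω, g ω j ∂Pr from hproj.symm]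
  -- the set where J = j
  set A : Set Ω := {ω | J ω = j} with hA
  have hAmeas : MeasurableSet A := hJm (MeasurableSet.singleton j)
  set B : Set Ω := {ω | S ω = 1} with hB
  have hBmeas : MeasurableSet B := hSm (MeasurableSet.singleton 1)
  -- rewrite the integrand
  have hrw : ∀ ω, g ω j = (A.indicator S ω) * (c * m * Φ j x) := by
    intro ω
    rw [hg]
    simp only []
    by_cases h : j = J ω
    · rw [if_pos h, Set.indicator_of_mem (by simp [hA, h.symm]), ← h]
      ring
    · rw [if_neg h, Set.indicator_of_notMem (by simp [hA]; exact fun hh => h hh.symm), zero_mul]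
  simp only [hrw]
  rw [integral_mul_const, integral_indicator hAmeas]
  -- S agrees a.e. with 2·1_B − 1
  have hSae : ∀ᵐ ω ∂Pr, S ω = B.indicator (fun _ => (2:ℝ)) ω - 1 := by
    filter_upwards [hS1] with ω hω
    rcases hω with h1 | h1
    · rw [Set.indicator_of_mem (by simp [hB, h1])]; rw [h1]; norm_num
    · rw [Set.indicator_of_notMem (by norm_num [hB, h1])]; rw [h1]; norm_num
  have hSset : ∫ ω in A, S ω ∂Pr = ∫ ω in A, (B.indicator (fun _ => (2:ℝ)) ω - 1) ∂Pr :=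
    integral_congr_ae (ae_restrict_of_ae hSae)
  rw [hSset]
  have hint1 : Integrable (B.indicator fun _ => (2:ℝ)) (Pr.restrict A) :=
    (integrable_const (2:ℝ)).indicator hBmeas |>.restrict
  rw [integral_sub hint1 (integrable_const 1)]
  rw [setIntegral_indicator hBmeas, setIntegral_const, setIntegral_const]
  -- measure computations
  have hAB : Pr (A ∩ B) = (m : ℝ≥0∞)⁻¹ * ENNReal.ofReal (E / (E + 1)) := by
    have := hindep.measure_inter_preimage_eq_mul {j} {(1:ℝ)} (MeasurableSet.singleton j)
      (MeasurableSet.singleton (1:ℝ))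
    have hA' : J ⁻¹' {j} = A := by ext ω; simp [hA]
    have hB' : S ⁻¹' {1} = B := by ext ω; simp [hB]
    rw [hA', hB'] at this
    rw [this, show Pr A = (m : ℝ≥0∞)⁻¹ from hJunif j, hSlaw]
  have hEE0 : (0:ℝ) ≤ E / (E + 1) := by positivity
  have hABr : (Pr (A ∩ B)).toReal = (m : ℝ)⁻¹ * (E / (E + 1)) := by
    rw [hAB, ENNReal.toReal_mul, ENNReal.toReal_ofReal hEE0]
    simp [ENNReal.toReal_inv]
  have hAr : (Pr A).toReal = (m : ℝ)⁻¹ := by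
    rw [hJunif j]
    simp [ENNReal.toReal_inv]
  rw [measureReal_def, measureReal_def, hABr, hAr]
  simp only [smul_eq_mul]
  rw [hc]
  have h' : (-1 + E) ≠ 0 := by linarith
  field_simp
  ring
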